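/- Let σ be a field automorphism of F_q with σ ≠ id. The code C(Λ_σ) is minimal: for all (n+1)×(n+1) matrices M, M' over F_q, if every pair ([x],[ξ]) of projective points with ξ·x = 0 and ξ·M'·x^σ ≠ 0 also satisfies ξ·M·x^σ ≠ 0 (i.e. the support of c_{M'} is contained in the support of c_M), then there exists λ ∈ F_q with M' = λ·M. -/

import Mathlib

open Matrix

namespace Stmt11Aux

variable {F : Type} [Field F] {m : ℕ}

/-- If every functional vanishing on `u` and `v` vanishes on `w`, then `w ∈ span {u,v}`. -/
lemma span_of_dual (u v w : Fin m → F)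
    (h : ∀ ξ : Fin m → F, ξ ⬝ᵥ u = 0 → ξ ⬝ᵥ v = 0 → ξ ⬝ᵥ w = 0) :
    ∃ a b : F, w = a • u + b • v := by
  by_contra hc
  push_neg at hc
  have hw : w ∉ Submodule.span F ({u, v} : Set (Fin m → F)) := by
    intro hmem
    obtain ⟨a, b, hab⟩ := Submodule.mem_span_pair.mp hmem
    exact hc a b hab.symm
  set U : Submodule F (Fin m → F) := Submodule.span F ({u, v} : Set (Fin m → F)) with hU
  have hπw : U.mkQ w ≠ 0 := by
    rw [Submodule.mkQ_apply, Ne, Submodule.Quotient.mk_eq_zero]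
    exact hw
  have hnall : ¬ ∀ g : Module.Dual F ((Fin m → F) ⧸ U), g (U.mkQ w) = 0 := by
    rw [Module.forall_dual_apply_eq_zero_iff F]
    exact hπw
  obtain ⟨g, hg⟩ := not_forall.mp hnall
  set φ : (Fin m → F) →ₗ[F] F := g.comp U.mkQ with hφ
  have key : ∀ z : Fin m → F, (fun i => φ (Pi.single i 1)) ⬝ᵥ z = φ z := by
    intro z
    calc (fun i => φ (Pi.single i 1)) ⬝ᵥ z
        = ∑ i, φ (Pi.single i 1) * z i := rfl
      _ = ∑ i, φ (z i • (Pi.single i 1 : Fin m → F)) := by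
          refine Finset.sum_congr rfl fun i _ => ?_
          rw [LinearMap.map_smul, smul_eq_mul, mul_comm]
      _ = φ (∑ i, z i • (Pi.single i 1 : Fin m → F)) := (map_sum φ _ _).symm
      _ = φ z := by
          congr 1
          refine Eq.trans ?_ (Finset.univ_sum_single z)
          refine Finset.sum_congr rfl fun i _ => ?_
          ext k
          by_cases hk : k = i <;> simp [Pi.single_apply, hk]
  have hzero : ∀ y ∈ U, φ y = 0 := by
    intro y hy
    show g (U.mkQ y) = 0
    rw [Submodule.mkQ_apply, (Submodule.Quotient.mk_eq_zero U).mpr hy, map_zero]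
  have hu : (fun i => φ (Pi.single i 1)) ⬝ᵥ u = 0 := by
    rw [key]; exact hzero u (Submodule.subset_span (by simp))
  have hv : (fun i => φ (Pi.single i 1)) ⬝ᵥ v = 0 := by
    rw [key]; exact hzero v (Submodule.subset_span (by simp))
  have hw0 := h _ hu hv
  rw [key] at hw0
  exact hg hw0

/-- Avoidance of two "hyperplane traces": there is a functional vanishing on `u, v`
but not on `s` nor on `t`, provided `s, t ∉ span {u, v}`. -/
lemma avoid (u v s t : Fin m → F)
    (hs : ¬ ∃ a b : F, s = a • u + b • v) (ht : ¬ ∃ a b : F, t = a • u + b • v) :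
    ∃ η : Fin m → F, η ⬝ᵥ u = 0 ∧ η ⬝ᵥ v = 0 ∧ η ⬝ᵥ s ≠ 0 ∧ η ⬝ᵥ t ≠ 0 := by
  have h1 : ∃ η : Fin m → F, η ⬝ᵥ u = 0 ∧ η ⬝ᵥ v = 0 ∧ η ⬝ᵥ s ≠ 0 := by
    by_contra hcon
    push_neg at hcon
    exact hs (span_of_dual u v s fun ξ h1 h2 => hcon ξ h1 h2)
  have h2 : ∃ η : Fin m → F, η ⬝ᵥ u = 0 ∧ η ⬝ᵥ v = 0 ∧ η ⬝ᵥ t ≠ 0 := by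
    by_contra hcon
    push_neg at hcon
    exact ht (span_of_dual u v t fun ξ h1 h2 => hcon ξ h1 h2)
  obtain ⟨η₁, hu1, hv1, hs1⟩ := h1
  obtain ⟨η₂, hu2, hv2, ht2⟩ := h2
  by_cases hst : η₁ ⬝ᵥ t ≠ 0
  · exact ⟨η₁, hu1, hv1, hs1, hst⟩
  by_cases hts : η₂ ⬝ᵥ s ≠ 0
  · exact ⟨η₂, hu2, hv2, hts, ht2⟩
  push_neg at hst hts
  refine ⟨η₁ + η₂, ?_, ?_, ?_, ?_⟩
  · rw [add_dotProduct, hu1, hu2, add_zero]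
  · rw [add_dotProduct, hv1, hv2, add_zero]
  · rw [add_dotProduct, hts, add_zero]; exact hs1
  · rw [add_dotProduct, hst, zero_add]; exact ht2


lemma sig_single (σ : F ≃+* F) (j : Fin m) :
    (fun k => σ ((Pi.single j (1:F) : Fin m → F) k)) = (Pi.single j (1:F) : Fin m → F) := by
  funext k
  by_cases hk : k = j <;> simp [Pi.single_apply, hk]

lemma sig_add (σ : F ≃+* F) (x y : Fin m → F) :
    (fun k => σ ((x + y) k)) = (fun k => σ (x k)) + (fun k => σ (y k)) := by
  funext k; simp

lemma sig_smul (σ : F ≃+* F) (c : F) (x : Fin m → F) :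
    (fun k => σ ((c • x) k)) = σ c • (fun k => σ (x k)) := by
  funext k; simp

lemma sig_zero (σ : F ≃+* F) : (fun k => σ ((0 : Fin m → F) k)) = (0 : Fin m → F) := by
  funext k; simp

/-- Nondegeneracy: a matrix whose σ-form vanishes on all incident pairs is zero. -/
lemma zlem (σ : F ≃+* F) (a : F) (ha : σ a ≠ a) (hm : 2 ≤ m)
    (N : Matrix (Fin m) (Fin m) F)
    (h : ∀ ξ x : Fin m → F, ξ ⬝ᵥ x = 0 → (ξ ᵥ* N) ⬝ᵥ (fun i => σ (x i)) = 0) :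
    N = 0 := by
  have e : ∀ (i j : Fin m) (c d : F),
      ((c • (Pi.single i 1 : Fin m → F)) ᵥ* N) ⬝ᵥ (d • (Pi.single j 1 : Fin m → F))
        = c * N i j * d := by
    intro i j c d
    rw [smul_vecMul, smul_dotProduct, dotProduct_smul, single_vecMul, smul_eq_mul, smul_eq_mul]
    rw [dotProduct_single]
    simp only [one_smul, Matrix.row]
    ring
  have hoff : ∀ i j : Fin m, i ≠ j → N i j = 0 := by
    intro i j hij
    have hdot : (Pi.single i (1:F) : Fin m → F) ⬝ᵥ (Pi.single j (1:F) : Fin m → F) = 0 := by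
      rw [dotProduct_single, Pi.single_apply, if_neg (Ne.symm hij), zero_mul]
    have := h (Pi.single i 1) (Pi.single j 1) hdot
    rw [sig_single σ j] at this
    have e' := e i j 1 1
    rw [one_smul, one_smul] at e'
    rw [e'] at this
    linear_combination this
  have hdiag : ∀ i j : Fin m, i ≠ j → N i i = N j j := by
    intro i j hij
    set si : Fin m → F := Pi.single i 1
    set sj : Fin m → F := Pi.single j 1
    have hdot : (si - sj) ⬝ᵥ (si + sj) = 0 := by
      rw [sub_dotProduct, dotProduct_add, dotProduct_add]
      rw [dotProduct_single, dotProduct_single, dotProduct_single, dotProduct_single]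
      simp [si, sj, Pi.single_apply, hij, Ne.symm hij]
    have := h (si - sj) (si + sj) hdot
    rw [show (fun k => σ ((si + sj) k)) = (fun k => σ (si k)) + (fun k => σ (sj k)) from sig_add σ si sj,
        sig_single σ i, sig_single σ j] at this
    rw [sub_vecMul, sub_dotProduct, dotProduct_add, dotProduct_add] at this
    have e11 : (si ᵥ* N) ⬝ᵥ si = N i i := by
      rw [show si ᵥ* N = fun k => 1 * N i k from single_vecMul N i 1, dotProduct_single]
      ring
    have e12 : (si ᵥ* N) ⬝ᵥ sj = N i j := by
      rw [show si ᵥ* N = fun k => 1 * N i k from single_vecMul N i 1, dotProduct_single]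
      ring
    have e21 : (sj ᵥ* N) ⬝ᵥ si = N j i := by
      rw [show sj ᵥ* N = fun k => 1 * N j k from single_vecMul N j 1, dotProduct_single]
      ring
    have e22 : (sj ᵥ* N) ⬝ᵥ sj = N j j := by
      rw [show sj ᵥ* N = fun k => 1 * N j k from single_vecMul N j 1, dotProduct_single]
      ring
    rw [e11, e12, e21, e22, hoff i j hij, hoff j i (Ne.symm hij)] at this
    linear_combination this
  -- now the diagonal vanishes
  set i0 : Fin m := ⟨0, by omega⟩ with hi0
  set i1 : Fin m := ⟨1, by omega⟩ with hi1
  have hne : i0 ≠ i1 := by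
    intro hcon
    have := congrArg Fin.val hcon
    simp [hi0, hi1] at this
  set s0 : Fin m → F := Pi.single i0 1 with hs0
  set s1 : Fin m → F := Pi.single i1 1 with hs1
  have d00 : s0 ⬝ᵥ s0 = 1 := by rw [hs0, dotProduct_single, Pi.single_apply, if_pos rfl, one_mul]
  have d01 : s0 ⬝ᵥ s1 = 0 := by
    rw [hs0, hs1, dotProduct_single, Pi.single_apply, if_neg (Ne.symm hne), zero_mul]
  have d10 : s1 ⬝ᵥ s0 = 0 := by
    rw [hs0, hs1, dotProduct_single, Pi.single_apply, if_neg hne, zero_mul]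
  have d11 : s1 ⬝ᵥ s1 = 1 := by rw [hs1, dotProduct_single, Pi.single_apply, if_pos rfl, one_mul]
  have hdot : (a • s0 - s1) ⬝ᵥ (s0 + a • s1) = 0 := by
    rw [sub_dotProduct, dotProduct_add, dotProduct_add, smul_dotProduct, smul_dotProduct,
        dotProduct_smul, dotProduct_smul, d00, d01, d10, d11]
    simp
  have hval := h (a • s0 - s1) (s0 + a • s1) hdot
  have hsig : (fun k => σ ((s0 + a • s1) k)) = s0 + σ a • s1 := by
    rw [sig_add σ s0 (a • s1), sig_smul σ a s1, hs0, hs1, sig_single σ i0, sig_single σ i1]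
  rw [hsig] at hval
  have expand : ((a • s0 - s1) ᵥ* N) ⬝ᵥ (s0 + σ a • s1)
      = a * N i0 i0 + a * N i0 i1 * σ a - N i1 i0 - N i1 i1 * σ a := by
    rw [sub_vecMul, sub_dotProduct, dotProduct_add, dotProduct_add]
    have e1 := e i0 i0 a 1
    have e2 := e i0 i1 a (σ a)
    have e3 := e i1 i0 1 1
    have e4 := e i1 i1 1 (σ a)
    simp only [one_smul] at e1 e2 e3 e4
    rw [hs0, hs1]
    rw [e2, e3, e4]
    have e1' : ((a • (Pi.single i0 1 : Fin m → F)) ᵥ* N) ⬝ᵥ (Pi.single i0 1 : Fin m → F)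
        = a * N i0 i0 * 1 := e1
    rw [e1']
    ring
  rw [expand, hoff i0 i1 hne, hoff i1 i0 (Ne.symm hne), hdiag i1 i0 (Ne.symm hne)] at hval
  have h00 : N i0 i0 = 0 := by
    have hfac : (a - σ a) * N i0 i0 = 0 := by linear_combination hval
    rcases mul_eq_zero.mp hfac with hz | hz
    · exact absurd (by linear_combination -hz : σ a = a) ha
    · exact hz
  have hdiag0 : ∀ i : Fin m, N i i = 0 := by
    intro i
    by_cases hii : i = i0
    · rw [hii]; exact h00
    · rw [hdiag i i0 hii]; exact h00
  ext i j
  by_cases hij : i = j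
  · rw [hij]; simpa using hdiag0 j
  · simpa using hoff i j hij


lemma card_ge_four (F : Type) [Field F] [Fintype F] (σ : F ≃+* F)
    (hσ : σ ≠ RingEquiv.refl F) : 4 ≤ Fintype.card F := by
  obtain ⟨p, hc⟩ := CharP.exists F
  haveI : CharP F p := hc
  obtain ⟨n0, hpp, hcard⟩ := FiniteField.card F p
  haveI : Fact p.Prime := ⟨hpp⟩
  by_cases hn : 2 ≤ (n0 : ℕ)
  · have h1 : 2 ^ 2 ≤ p ^ (n0 : ℕ) := by
      calc (2:ℕ) ^ 2 ≤ p ^ 2 := Nat.pow_le_pow_left hpp.two_le 2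
        _ ≤ p ^ (n0 : ℕ) := Nat.pow_le_pow_right (le_trans (by norm_num) hpp.two_le) hn
    rw [hcard]; exact le_trans (by norm_num) h1
  · exfalso
    have hn1 : (n0 : ℕ) = 1 := by
      have hpos : 1 ≤ (n0 : ℕ) := n0.property
      omega
    rw [hn1, pow_one] at hcard
    set χ : ZMod p →+* F := ZMod.castHom (dvd_refl p) F with hχ
    have hinj : Function.Injective χ := χ.injective
    have hbij : Function.Bijective χ := by
      refine (Fintype.bijective_iff_injective_and_card χ).mpr ⟨hinj, ?_⟩
      rw [ZMod.card, hcard]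
    have hfix : (↑σ : F →+* F).comp χ = χ := RingHom.ext_zmod _ _
    apply hσ
    ext xx
    obtain ⟨y, hy⟩ := hbij.2 xx
    rw [← hy]
    have := RingHom.congr_fun hfix y
    simpa using this

lemma SminusE_card [Fintype F] (T : (Fin m → F) → (Fin m → F)) (σ : F ≃+* F)
    (hTadd : ∀ y z, T (y + z) = T y + T z)
    (hTsmul : ∀ c y, T (c • y) = σ c • T y)
    (x : Fin m → F) (hx : ¬ ∃ c : F, T x = c • x) :
    ({z | ∃ a b : F, T z = a • z + b • x} \ {z | ∃ a b : F, z = a • x + b • T x}).ncard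
      ≤ Fintype.card F ^ (m - 1) - 1 := by
  classical
  have hT0 : T 0 = 0 := by
    have h := hTadd 0 0
    rw [add_zero] at h
    exact (add_eq_right.mp h.symm)
  have hx0 : x ≠ 0 := by
    intro h0; exact hx ⟨0, by rw [h0, hT0, zero_smul]⟩
  obtain ⟨j, hj⟩ : ∃ j, x j ≠ 0 := by
    by_contra hcon; push_neg at hcon
    exact hx0 (funext hcon)
  set S : Set (Fin m → F) := {z | ∃ a b : F, T z = a • z + b • x} with hS
  set E : Set (Fin m → F) := {z | ∃ a b : F, z = a • x + b • T x} with hE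
  set f : (Fin m → F) → ({i : Fin m // i ≠ j} → F) :=
    fun z i => z i.val - z j * (x j)⁻¹ * x i.val with hf
  have keydiff : ∀ z z' : Fin m → F, f z = f z' → z = z' + ((z j - z' j) * (x j)⁻¹) • x := by
    intro z z' hff
    funext i
    by_cases hi : i = j
    · subst hi
      show z i = z' i + ((z i - z' i) * (x i)⁻¹) * x i
      field_simp
      ring
    · have h2 := congrFun hff ⟨i, hi⟩
      show z i = z' i + ((z j - z' j) * (x j)⁻¹) • x i
      have h3 : z i - z j * (x j)⁻¹ * x i = z' i - z' j * (x j)⁻¹ * x i := h2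
      rw [smul_eq_mul]
      linear_combination h3
  have hinj : Set.InjOn f (S \ E) := by
    intro z hz z' hz' hff
    obtain ⟨hzS, hzE⟩ := hz
    obtain ⟨hz'S, hz'E⟩ := hz'
    obtain ⟨a, b, hab⟩ := hzS
    obtain ⟨a', b', hab'⟩ := hz'S
    set c : F := (z j - z' j) * (x j)⁻¹ with hc
    have hzz' : z = z' + c • x := keydiff z z' hff
    by_cases hcz : c = 0
    · rw [hzz', hcz, zero_smul, add_zero]
    · exfalso
      have hTz : T z = T z' + σ c • T x := by rw [hzz', hTadd, hTsmul]
      have h1 : a • (z' + c • x) + b • x = a' • z' + b' • x + σ c • T x := by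
        rw [← hzz', ← hab, hTz, hab']
      have key : (a - a') • z' + (a * c + b - b') • x = σ c • T x := by
        linear_combination (norm := module) h1
      by_cases haa : a = a'
      · apply hx
        have hσc : σ c ≠ 0 := fun h0 => hcz (by
          have := σ.injective (a₁ := c) (a₂ := 0) (by rw [h0, map_zero])
          exact this)
        refine ⟨(σ c)⁻¹ * (a * c + b - b'), ?_⟩
        have key2 : (a * c + b - b') • x = σ c • T x := by
          rw [← key, haa, sub_self, zero_smul, zero_add]
        calc T x = (σ c)⁻¹ • (σ c • T x) := by rw [smul_smul, inv_mul_cancel₀ hσc, one_smul]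
          _ = (σ c)⁻¹ • ((a * c + b - b') • x) := by rw [key2]
          _ = ((σ c)⁻¹ * (a * c + b - b')) • x := by rw [smul_smul]
      · apply hz'E
        have hne : a - a' ≠ 0 := sub_ne_zero.mpr haa
        refine ⟨-((a - a')⁻¹ * (a * c + b - b')), (a - a')⁻¹ * σ c, ?_⟩
        have key3 : (a - a') • z' = σ c • T x - (a * c + b - b') • x := by
          rw [← key]; abel
        calc z' = (a - a')⁻¹ • ((a - a') • z') := by
              rw [smul_smul, inv_mul_cancel₀ hne, one_smul]
          _ = (a - a')⁻¹ • (σ c • T x - (a * c + b - b') • x) := by rw [key3]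
          _ = -((a - a')⁻¹ * (a * c + b - b')) • x + ((a - a')⁻¹ * σ c) • T x := by
              rw [smul_sub, smul_smul, smul_smul, neg_smul]; abel
  have himg : ∀ z ∈ S \ E, f z ≠ 0 := by
    intro z hz h0
    apply hz.2
    refine ⟨z j * (x j)⁻¹, 0, ?_⟩
    rw [zero_smul, add_zero]
    funext i
    by_cases hi : i = j
    · subst hi
      show z i = (z i * (x i)⁻¹) • x i
      rw [smul_eq_mul]; field_simp
    · have h2 := congrFun h0 ⟨i, hi⟩
      show z i = (z j * (x j)⁻¹) • x i
      have h3 : z i - z j * (x j)⁻¹ * x i = 0 := h2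
      rw [smul_eq_mul]
      linear_combination h3
  have hsub : f '' (S \ E) ⊆ {g : {i : Fin m // i ≠ j} → F | g ≠ 0} := by
    rintro g ⟨z, hz, rfl⟩
    exact himg z hz
  have hcard1 : (S \ E).ncard = (f '' (S \ E)).ncard := (Set.ncard_image_of_injOn hinj).symm
  have hcard2 : (f '' (S \ E)).ncard ≤ ({g : {i : Fin m // i ≠ j} → F | g ≠ 0}).ncard :=
    Set.ncard_le_ncard hsub (Set.toFinite _)
  have hcard3 : ({g : {i : Fin m // i ≠ j} → F | g ≠ 0}).ncard
      = Fintype.card F ^ (m - 1) - 1 := by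
    have h4 : ({g : {i : Fin m // i ≠ j} → F | g ≠ 0}) = Set.univ \ {0} := by
      ext g; simp
    rw [h4, Set.ncard_diff_singleton_of_mem (Set.mem_univ _), Set.ncard_univ,
      Nat.card_eq_fintype_card, Fintype.card_fun]
    congr 2
    rw [Fintype.card_subtype_compl, Fintype.card_fin, Fintype.card_subtype_eq]
  rw [hcard1, ← hcard3]
  exact hcard2


lemma dot_sig (σ : F ≃+* F) (w x : Fin m → F) :
    w ⬝ᵥ (fun i => σ (x i)) = σ (x ⬝ᵥ (fun j => σ.symm (w j))) := by
  simp only [dotProduct, map_sum]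
  refine Finset.sum_congr rfl fun i _ => ?_
  rw [_root_.map_mul, RingEquiv.apply_symm_apply, mul_comm]

lemma dot_sig_eq_zero_iff (σ : F ≃+* F) (w x : Fin m → F) :
    w ⬝ᵥ (fun i => σ (x i)) = 0 ↔ x ⬝ᵥ (fun j => σ.symm (w j)) = 0 := by
  rw [dot_sig]
  constructor
  · intro h; exact σ.injective (h.trans (map_zero σ).symm)
  · intro h; rw [h, map_zero]

lemma colDec (σ : F ≃+* F) (M M' : Matrix (Fin m) (Fin m) F)
    (hsupp : ∀ x ξ : Fin m → F, ξ ⬝ᵥ x = 0 →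
      (ξ ᵥ* M') ⬝ᵥ (fun i => σ (x i)) ≠ 0 → (ξ ᵥ* M) ⬝ᵥ (fun i => σ (x i)) ≠ 0)
    (x : Fin m → F) :
    ∃ a b : F, (M' *ᵥ (fun i => σ (x i))) = a • x + b • (M *ᵥ (fun i => σ (x i))) := by
  apply span_of_dual
  intro ξ h1 h2
  rw [dotProduct_mulVec] at h2 ⊢
  by_contra hne
  exact hsupp x ξ h1 hne h2

lemma rowDec (σ : F ≃+* F) (M M' : Matrix (Fin m) (Fin m) F)
    (hsupp : ∀ x ξ : Fin m → F, ξ ⬝ᵥ x = 0 →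
      (ξ ᵥ* M') ⬝ᵥ (fun i => σ (x i)) ≠ 0 → (ξ ᵥ* M) ⬝ᵥ (fun i => σ (x i)) ≠ 0)
    (ξ : Fin m → F) :
    ∃ a b : F, (fun j => σ.symm ((ξ ᵥ* M') j))
      = a • ξ + b • (fun j => σ.symm ((ξ ᵥ* M) j)) := by
  apply span_of_dual
  intro x h1 h2
  have h1' : ξ ⬝ᵥ x = 0 := by rwa [dotProduct_comm]
  have h2' : (ξ ᵥ* M) ⬝ᵥ (fun i => σ (x i)) = 0 := (dot_sig_eq_zero_iff σ _ x).mpr h2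
  rw [← dot_sig_eq_zero_iff σ (ξ ᵥ* M') x]
  by_contra hne
  exact hsupp x ξ h1' hne h2'

lemma ratio_x (σ : F ≃+* F) (M M' : Matrix (Fin m) (Fin m) F)
    (hsupp : ∀ x ξ : Fin m → F, ξ ⬝ᵥ x = 0 →
      (ξ ᵥ* M') ⬝ᵥ (fun i => σ (x i)) ≠ 0 → (ξ ᵥ* M) ⬝ᵥ (fun i => σ (x i)) ≠ 0)
    (x ξ ξ' : Fin m → F) (hξ : ξ ⬝ᵥ x = 0) (hξ' : ξ' ⬝ᵥ x = 0) :
    ((ξ ᵥ* M') ⬝ᵥ fun i => σ (x i)) * ((ξ' ᵥ* M) ⬝ᵥ fun i => σ (x i))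
      = ((ξ' ᵥ* M') ⬝ᵥ fun i => σ (x i)) * ((ξ ᵥ* M) ⬝ᵥ fun i => σ (x i)) := by
  obtain ⟨a, b, hab⟩ := colDec σ M M' hsupp x
  have key : ∀ η : Fin m → F, η ⬝ᵥ x = 0 →
      (η ᵥ* M') ⬝ᵥ (fun i => σ (x i)) = b * ((η ᵥ* M) ⬝ᵥ (fun i => σ (x i))) := by
    intro η hη
    rw [← dotProduct_mulVec, hab, dotProduct_add, dotProduct_smul, dotProduct_smul, hη,
      smul_eq_mul, smul_eq_mul, mul_zero, zero_add, dotProduct_mulVec]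
  rw [key ξ hξ, key ξ' hξ']
  ring

lemma ratio_xi (σ : F ≃+* F) (M M' : Matrix (Fin m) (Fin m) F)
    (hsupp : ∀ x ξ : Fin m → F, ξ ⬝ᵥ x = 0 →
      (ξ ᵥ* M') ⬝ᵥ (fun i => σ (x i)) ≠ 0 → (ξ ᵥ* M) ⬝ᵥ (fun i => σ (x i)) ≠ 0)
    (ξ x x' : Fin m → F) (hx : ξ ⬝ᵥ x = 0) (hx' : ξ ⬝ᵥ x' = 0) :
    ((ξ ᵥ* M') ⬝ᵥ fun i => σ (x i)) * ((ξ ᵥ* M) ⬝ᵥ fun i => σ (x' i))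
      = ((ξ ᵥ* M') ⬝ᵥ fun i => σ (x' i)) * ((ξ ᵥ* M) ⬝ᵥ fun i => σ (x i)) := by
  obtain ⟨a, b, hab⟩ := rowDec σ M M' hsupp ξ
  have key : ∀ y : Fin m → F, ξ ⬝ᵥ y = 0 →
      (ξ ᵥ* M') ⬝ᵥ (fun i => σ (y i)) = σ b * ((ξ ᵥ* M) ⬝ᵥ (fun i => σ (y i))) := by
    intro y hy
    have hyξ : y ⬝ᵥ ξ = 0 := by rwa [dotProduct_comm]
    rw [dot_sig σ (ξ ᵥ* M') y, dot_sig σ (ξ ᵥ* M) y, hab, dotProduct_add, dotProduct_smul,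
      dotProduct_smul, hyξ, smul_eq_mul, smul_eq_mul, mul_zero, zero_add, _root_.map_mul]
  rw [key x hx, key x' hx']
  ring


lemma lemmaK [Fintype F] (hq : 4 ≤ Fintype.card F) (hm : 3 ≤ m)
    (T : (Fin m → F) → (Fin m → F)) (σ : F ≃+* F)
    (hTadd : ∀ y z, T (y + z) = T y + T z)
    (hTsmul : ∀ c y, T (c • y) = σ c • T y)
    (x0 x1 : Fin m → F)
    (h0 : ¬ ∃ c : F, T x0 = c • x0) (h1 : ¬ ∃ c : F, T x1 = c • x1) :
    ∃ z : Fin m → F, (¬ ∃ a b : F, T z = a • z + b • x0) ∧ (¬ ∃ a b : F, T z = a • z + b • x1) ∧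
      (¬ ∃ a b : F, z = a • x0 + b • T x0) ∧ (¬ ∃ a b : F, z = a • x1 + b • T x1) := by
  classical
  set S0 : Set (Fin m → F) := {z | ∃ a b : F, T z = a • z + b • x0} with hS0
  set S1 : Set (Fin m → F) := {z | ∃ a b : F, T z = a • z + b • x1} with hS1
  set E0 : Set (Fin m → F) := {z | ∃ a b : F, z = a • x0 + b • T x0} with hE0
  set E1 : Set (Fin m → F) := {z | ∃ a b : F, z = a • x1 + b • T x1} with hE1
  by_contra hcon
  have hcover : (Set.univ : Set (Fin m → F)) ⊆ (S0 \ E0) ∪ (S1 \ E1) ∪ E0 ∪ E1 := by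
    intro z _
    by_cases hzE0 : z ∈ E0
    · exact Or.inl (Or.inr hzE0)
    by_cases hzE1 : z ∈ E1
    · exact Or.inr hzE1
    by_cases hzS0 : z ∈ S0
    · exact Or.inl (Or.inl (Or.inl ⟨hzS0, hzE0⟩))
    have hzS1 : z ∈ S1 := by
      by_contra hzS1
      exact hcon ⟨z, hzS0, hzS1, hzE0, hzE1⟩
    exact Or.inl (Or.inl (Or.inr ⟨hzS1, hzE1⟩))
  -- cardinalities
  set q : ℕ := Fintype.card F with hqdef
  have hq1 : 1 ≤ q := Fintype.card_pos
  have hcS0 : (S0 \ E0).ncard ≤ q ^ (m - 1) - 1 :=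
    SminusE_card T σ hTadd hTsmul x0 h0
  have hcS1 : (S1 \ E1).ncard ≤ q ^ (m - 1) - 1 :=
    SminusE_card T σ hTadd hTsmul x1 h1
  have hcE0 : E0.ncard ≤ q ^ 2 := by
    have : E0 ⊆ (fun p : F × F => p.1 • x0 + p.2 • T x0) '' Set.univ := by
      rintro z ⟨a, b, rfl⟩
      exact ⟨(a, b), Set.mem_univ _, rfl⟩
    calc E0.ncard ≤ ((fun p : F × F => p.1 • x0 + p.2 • T x0) '' Set.univ).ncard :=
          Set.ncard_le_ncard this (Set.toFinite _)
      _ ≤ (Set.univ : Set (F × F)).ncard := Set.ncard_image_le (Set.toFinite _)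
      _ = q ^ 2 := by
          rw [Set.ncard_univ, Nat.card_eq_fintype_card, Fintype.card_prod, sq]
  have hcE1 : E1.ncard ≤ q ^ 2 := by
    have : E1 ⊆ (fun p : F × F => p.1 • x1 + p.2 • T x1) '' Set.univ := by
      rintro z ⟨a, b, rfl⟩
      exact ⟨(a, b), Set.mem_univ _, rfl⟩
    calc E1.ncard ≤ ((fun p : F × F => p.1 • x1 + p.2 • T x1) '' Set.univ).ncard :=
          Set.ncard_le_ncard this (Set.toFinite _)
      _ ≤ (Set.univ : Set (F × F)).ncard := Set.ncard_image_le (Set.toFinite _)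
      _ = q ^ 2 := by
          rw [Set.ncard_univ, Nat.card_eq_fintype_card, Fintype.card_prod, sq]
  have huniv : (Set.univ : Set (Fin m → F)).ncard = q ^ m := by
    rw [Set.ncard_univ, Nat.card_eq_fintype_card, Fintype.card_fun, Fintype.card_fin]
  have hle : q ^ m ≤ ((S0 \ E0) ∪ (S1 \ E1) ∪ E0 ∪ E1).ncard := by
    rw [← huniv]
    exact Set.ncard_le_ncard hcover (Set.toFinite _)
  have hbound : ((S0 \ E0) ∪ (S1 \ E1) ∪ E0 ∪ E1).ncard
      ≤ (q ^ (m - 1) - 1) + (q ^ (m - 1) - 1) + q ^ 2 + q ^ 2 := by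
    calc ((S0 \ E0) ∪ (S1 \ E1) ∪ E0 ∪ E1).ncard
        ≤ ((S0 \ E0) ∪ (S1 \ E1) ∪ E0).ncard + E1.ncard := Set.ncard_union_le _ _
      _ ≤ ((S0 \ E0) ∪ (S1 \ E1)).ncard + E0.ncard + E1.ncard := by
          have := Set.ncard_union_le ((S0 \ E0) ∪ (S1 \ E1)) E0
          omega
      _ ≤ (S0 \ E0).ncard + (S1 \ E1).ncard + E0.ncard + E1.ncard := by
          have := Set.ncard_union_le (S0 \ E0) (S1 \ E1)
          omega
      _ ≤ (q ^ (m - 1) - 1) + (q ^ (m - 1) - 1) + q ^ 2 + q ^ 2 := by omega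
  -- arithmetic contradiction
  have hA1 : 1 ≤ q ^ (m - 1) := Nat.one_le_pow _ _ (by omega)
  have hBA : q ^ 2 ≤ q ^ (m - 1) := Nat.pow_le_pow_right (by omega) (by omega)
  have hqm : q ^ m = q * q ^ (m - 1) := by
    conv_lhs => rw [show m = (m - 1) + 1 by omega]
    rw [pow_succ]
    ring
  have hmul : 4 * q ^ (m - 1) ≤ q * q ^ (m - 1) := Nat.mul_le_mul_right _ hq
  omega



lemma ratio_const [Fintype F] (σ : F ≃+* F) (hq : 4 ≤ Fintype.card F) (hm : 3 ≤ m)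
    (M M' : Matrix (Fin m) (Fin m) F)
    (hsupp : ∀ x ξ : Fin m → F, ξ ⬝ᵥ x = 0 →
      (ξ ᵥ* M') ⬝ᵥ (fun i => σ (x i)) ≠ 0 → (ξ ᵥ* M) ⬝ᵥ (fun i => σ (x i)) ≠ 0)
    (ξ0 x0 ξ1 x1 : Fin m → F)
    (h00 : ξ0 ⬝ᵥ x0 = 0) (hQ0 : (ξ0 ᵥ* M) ⬝ᵥ (fun i => σ (x0 i)) ≠ 0)
    (h11 : ξ1 ⬝ᵥ x1 = 0) (hQ1 : (ξ1 ᵥ* M) ⬝ᵥ (fun i => σ (x1 i)) ≠ 0) :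
    ((ξ0 ᵥ* M') ⬝ᵥ fun i => σ (x0 i)) * ((ξ1 ᵥ* M) ⬝ᵥ fun i => σ (x1 i))
      = ((ξ1 ᵥ* M') ⬝ᵥ fun i => σ (x1 i)) * ((ξ0 ᵥ* M) ⬝ᵥ fun i => σ (x0 i)) := by
  by_cases hdep : ∃ c : F, x1 = c • x0
  · obtain ⟨c, hc⟩ := hdep
    have hcne : c ≠ 0 := by
      intro h0
      apply hQ1
      have hx10 : x1 = 0 := by rw [hc, h0, zero_smul]
      have : (fun i => σ (x1 i)) = (0 : Fin m → F) := by
        funext i; rw [hx10]; simp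
      rw [this, dotProduct_zero]
    have hξ0x1 : ξ0 ⬝ᵥ x1 = 0 := by
      rw [hc, dotProduct_smul, h00, smul_zero]
    have hsig1 : (fun i => σ (x1 i)) = σ c • (fun i => σ (x0 i)) := by
      funext i
      rw [hc]
      show σ (c * x0 i) = σ c * σ (x0 i)
      exact _root_.map_mul σ c (x0 i)
    have hQ01ne : (ξ0 ᵥ* M) ⬝ᵥ (fun i => σ (x1 i)) ≠ 0 := by
      rw [hsig1, dotProduct_smul, smul_eq_mul]
      exact mul_ne_zero (fun h0 => hcne (σ.injective (h0.trans (map_zero σ).symm))) hQ0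
    have e1 := ratio_x σ M M' hsupp x1 ξ1 ξ0 h11 hξ0x1
    have e2 := ratio_xi σ M M' hsupp ξ0 x1 x0 hξ0x1 h00
    have d1 := (div_eq_div_iff hQ1 hQ01ne).mpr e1
    have d2 := (div_eq_div_iff hQ01ne hQ0).mpr e2
    exact (div_eq_div_iff hQ0 hQ1).mp (d1.trans d2).symm
  · have hT0 : ¬ ∃ c : F, (M *ᵥ fun i => σ (x0 i)) = c • x0 := by
      rintro ⟨c, hcon⟩
      apply hQ0
      rw [← dotProduct_mulVec, hcon, dotProduct_smul, h00, smul_zero]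
    have hT1 : ¬ ∃ c : F, (M *ᵥ fun i => σ (x1 i)) = c • x1 := by
      rintro ⟨c, hcon⟩
      apply hQ1
      rw [← dotProduct_mulVec, hcon, dotProduct_smul, h11, smul_zero]
    set T : (Fin m → F) → (Fin m → F) := fun y => M *ᵥ (fun i => σ (y i)) with hT
    have hTadd : ∀ y z : Fin m → F, T (y + z) = T y + T z := by
      intro y z
      rw [hT]
      show M *ᵥ (fun i => σ ((y + z) i)) = _
      rw [sig_add σ y z, Matrix.mulVec_add]
    have hTsmul : ∀ (c : F) (y : Fin m → F), T (c • y) = σ c • T y := by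
      intro c y
      rw [hT]
      show M *ᵥ (fun i => σ ((c • y) i)) = _
      rw [sig_smul σ c y, Matrix.mulVec_smul]
    obtain ⟨z, hzS0, hzS1, hzE0, hzE1⟩ := lemmaK hq hm T σ hTadd hTsmul x0 x1 hT0 hT1
    -- functional η for the pair (x0, z)
    have hs0 : ¬ ∃ a b : F, T x0 = a • x0 + b • z := by
      rintro ⟨a, b, hab⟩
      by_cases hb : b = 0
      · rw [hb, zero_smul, add_zero] at hab
        exact hT0 ⟨a, hab⟩
      · apply hzE0
        refine ⟨-(b⁻¹ * a), b⁻¹, ?_⟩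
        have hbz : b • z = T x0 - a • x0 := by rw [hab]; abel
        calc z = b⁻¹ • (b • z) := by rw [smul_smul, inv_mul_cancel₀ hb, one_smul]
          _ = b⁻¹ • (T x0 - a • x0) := by rw [hbz]
          _ = -(b⁻¹ * a) • x0 + b⁻¹ • T x0 := by
              rw [smul_sub, smul_smul, neg_smul]; abel
    have ht0 : ¬ ∃ a b : F, T z = a • x0 + b • z := by
      rintro ⟨a, b, hab⟩
      exact hzS0 ⟨b, a, by rw [hab]; abel⟩
    obtain ⟨η, hηx0, hηz, hηT0, hηTz⟩ := avoid x0 z (T x0) (T z) hs0 ht0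
    -- functional η' for the pair (x1, z)
    have hs1 : ¬ ∃ a b : F, T x1 = a • x1 + b • z := by
      rintro ⟨a, b, hab⟩
      by_cases hb : b = 0
      · rw [hb, zero_smul, add_zero] at hab
        exact hT1 ⟨a, hab⟩
      · apply hzE1
        refine ⟨-(b⁻¹ * a), b⁻¹, ?_⟩
        have hbz : b • z = T x1 - a • x1 := by rw [hab]; abel
        calc z = b⁻¹ • (b • z) := by rw [smul_smul, inv_mul_cancel₀ hb, one_smul]
          _ = b⁻¹ • (T x1 - a • x1) := by rw [hbz]
          _ = -(b⁻¹ * a) • x1 + b⁻¹ • T x1 := by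
              rw [smul_sub, smul_smul, neg_smul]; abel
    have ht1 : ¬ ∃ a b : F, T z = a • x1 + b • z := by
      rintro ⟨a, b, hab⟩
      exact hzS1 ⟨b, a, by rw [hab]; abel⟩
    obtain ⟨η', hη'x1, hη'z, hη'T1, hη'Tz⟩ := avoid x1 z (T x1) (T z) hs1 ht1
    -- translate nonvanishing
    have hQη0 : (η ᵥ* M) ⬝ᵥ (fun i => σ (x0 i)) ≠ 0 := by
      rw [← dotProduct_mulVec]; exact hηT0
    have hQηz : (η ᵥ* M) ⬝ᵥ (fun i => σ (z i)) ≠ 0 := by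
      rw [← dotProduct_mulVec]; exact hηTz
    have hQη'z : (η' ᵥ* M) ⬝ᵥ (fun i => σ (z i)) ≠ 0 := by
      rw [← dotProduct_mulVec]; exact hη'Tz
    have hQη'1 : (η' ᵥ* M) ⬝ᵥ (fun i => σ (x1 i)) ≠ 0 := by
      rw [← dotProduct_mulVec]; exact hη'T1
    have d1 := (div_eq_div_iff hQ0 hQη0).mpr (ratio_x σ M M' hsupp x0 ξ0 η h00 hηx0)
    have d2 := (div_eq_div_iff hQη0 hQηz).mpr (ratio_xi σ M M' hsupp η x0 z hηx0 hηz)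
    have d3 := (div_eq_div_iff hQηz hQη'z).mpr (ratio_x σ M M' hsupp z η η' hηz hη'z)
    have d4 := (div_eq_div_iff hQη'z hQη'1).mpr (ratio_xi σ M M' hsupp η' z x1 hη'z hη'x1)
    have d5 := (div_eq_div_iff hQη'1 hQ1).mpr (ratio_x σ M M' hsupp x1 η' ξ1 hη'x1 h11)
    exact (div_eq_div_iff hQ0 hQ1).mp (d1.trans (d2.trans (d3.trans (d4.trans d5))))


end Stmt11Aux

open Matrix

theorem stmt_11 (F : Type) [Field F] [Fintype F] (n : ℕ) (hn : 2 ≤ n)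
    (σ : F ≃+* F) (hσ : σ ≠ RingEquiv.refl F)
    (M M' : Matrix (Fin (n + 1)) (Fin (n + 1)) F)
    (hsupp : ∀ x ξ : Fin (n + 1) → F, ξ ⬝ᵥ x = 0 →
      (ξ ᵥ* M') ⬝ᵥ (fun i => σ (x i)) ≠ 0 → (ξ ᵥ* M) ⬝ᵥ (fun i => σ (x i)) ≠ 0) :
    ∃ l : F, M' = l • M := by
  classical
  have hm : 3 ≤ n + 1 := by omega
  have hq : 4 ≤ Fintype.card F := Stmt11Aux.card_ge_four F σ hσ
  obtain ⟨aa, haa⟩ : ∃ a : F, σ a ≠ a := by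
    by_contra hfa
    push_neg at hfa
    exact hσ (RingEquiv.ext fun y => hfa y)
  by_cases hP : ∃ ξ x : Fin (n+1) → F, ξ ⬝ᵥ x = 0 ∧ (ξ ᵥ* M) ⬝ᵥ (fun i => σ (x i)) ≠ 0
  · obtain ⟨ξ0, x0, h00, hQ0⟩ := hP
    refine ⟨((ξ0 ᵥ* M') ⬝ᵥ fun i => σ (x0 i)) / ((ξ0 ᵥ* M) ⬝ᵥ fun i => σ (x0 i)), ?_⟩
    set l : F := ((ξ0 ᵥ* M') ⬝ᵥ fun i => σ (x0 i)) / ((ξ0 ᵥ* M) ⬝ᵥ fun i => σ (x0 i)) with hl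
    have claim : ∀ ξ x : Fin (n+1) → F, ξ ⬝ᵥ x = 0 →
        (ξ ᵥ* M') ⬝ᵥ (fun i => σ (x i)) = l * ((ξ ᵥ* M) ⬝ᵥ (fun i => σ (x i))) := by
      intro ξ x hx
      by_cases hQ : (ξ ᵥ* M) ⬝ᵥ (fun i => σ (x i)) = 0
      · rw [hQ, mul_zero]
        by_contra hne
        exact hsupp x ξ hx hne hQ
      · have hrc := Stmt11Aux.ratio_const σ hq hm M M' hsupp ξ0 x0 ξ x h00 hQ0 hx hQ
        rw [hl, div_mul_eq_mul_div, eq_div_iff hQ0]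
        linear_combination -hrc
    have hZ : ∀ ξ x : Fin (n+1) → F, ξ ⬝ᵥ x = 0 →
        (ξ ᵥ* (M' - l • M)) ⬝ᵥ (fun i => σ (x i)) = 0 := by
      intro ξ x hx
      rw [← dotProduct_mulVec, Matrix.sub_mulVec, smul_mulVec, dotProduct_sub,
        dotProduct_smul, dotProduct_mulVec, dotProduct_mulVec, claim ξ x hx, smul_eq_mul]
      ring
    have hzero := Stmt11Aux.zlem σ aa haa (by omega) (M' - l • M) hZ
    exact sub_eq_zero.mp hzero
  · refine ⟨0, ?_⟩
    push_neg at hP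
    have hZ : ∀ ξ x : Fin (n+1) → F, ξ ⬝ᵥ x = 0 →
        (ξ ᵥ* M') ⬝ᵥ (fun i => σ (x i)) = 0 := by
      intro ξ x hx
      by_contra hne
      exact hsupp x ξ hx hne (hP ξ x hx)
    have hzero := Stmt11Aux.zlem σ aa haa (by omega) M' hZ
    rw [hzero, zero_smul]
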